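/- (θ-Hilbert's inequality.) Let Λ, Λ' > 1 be real numbers with 1/Λ + 1/Λ' = 1 (so Λ' = Λ/(Λ−1)), and let {a_m}_{m∈ℕ} and {b_n}_{n∈ℕ} be sequences of nonnegative real numbers such that ∑_{m=1}^∞ a_m^Λ and ∑_{n=1}^∞ b_n^{Λ'} are finite. Then ∑_{m=1}^∞ ∑_{n=1}^∞ a_m b_n / (m+n) ≤ (π / sin(π/Λ)) · (∑_{m=1}^∞ a_m^Λ)^{1/Λ} · (∑_{n=1}^∞ b_n^{Λ'})^{1/Λ'}. -/

import Mathlib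

open MeasureTheory Real Set intervalIntegral

theorem lint_image {s : Set ℝ} {f f' : ℝ → ℝ}
    (hs : MeasurableSet s) (hf' : ∀ x ∈ s, HasDerivWithinAt f (f' x) s x)
    (hf : InjOn f s) (g : ℝ → ENNReal) :
    ∫⁻ x in f '' s, g x = ∫⁻ x in s, ENNReal.ofReal |f' x| * g (f x) := by
  simpa only [ContinuousLinearMap.det_toSpanSingleton] using
    lintegral_image_eq_lintegral_abs_det_fderiv_mul volume hs
      (fun x hx => (hf' x hx).hasFDerivWithinAt) hf g

theorem beta_real {r : ℝ} (h0 : 0 < r) (h1 : r < 1) :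
    ∫ x in (0:ℝ)..1, x ^ (r-1) * (1-x) ^ (-r) = π / Real.sin (π * r) := by
  have key : Complex.betaIntegral r (1 - r) = ((π / Real.sin (π * r) : ℝ) : ℂ) := by
    have h := Complex.Gamma_mul_Gamma_eq_betaIntegral (s := (r:ℂ)) (t := (1 - r : ℂ))
      (by simpa using h0) (by simp [Complex.sub_re]; linarith)
    rw [show ((r:ℂ) + (1 - r)) = 1 by ring, Complex.Gamma_one, one_mul] at h
    rw [← h, Complex.Gamma_mul_Gamma_one_sub, Complex.ofReal_div, Complex.ofReal_sin,
      Complex.ofReal_mul]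
  have heq : Complex.betaIntegral r (1 - r)
      = ((∫ x in (0:ℝ)..1, x ^ (r-1) * (1-x) ^ (-r) : ℝ) : ℂ) := by
    rw [Complex.betaIntegral, ← intervalIntegral.integral_ofReal]
    apply intervalIntegral.integral_congr
    intro x hx
    rw [uIcc_of_le (by norm_num)] at hx
    obtain ⟨hx0, hx1⟩ := hx
    have e1 : ((r:ℂ) - 1) = ((r - 1 : ℝ) : ℂ) := by push_cast; ring
    have e2 : (1 - (r:ℂ) - 1) = ((-r : ℝ) : ℂ) := by push_cast; ring
    have e3 : (1 - (x:ℂ)) = ((1 - x : ℝ) : ℂ) := by push_cast; ring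
    simp only [e1, e2, e3]
    rw [← Complex.ofReal_cpow hx0, ← Complex.ofReal_cpow (by linarith)]
    push_cast
    ring
  rw [heq] at key
  exact_mod_cast key

theorem beta_integrable {r : ℝ} (h0 : 0 < r) (h1 : r < 1) :
    IntegrableOn (fun x : ℝ => x ^ (r-1) * (1-x) ^ (-r)) (Ioo 0 1) := by
  have h := Complex.betaIntegral_convergent (u := (r:ℂ)) (v := (1 - r : ℂ))
    (by simpa using h0) (by simp [Complex.sub_re]; linarith)
  have h2 : IntegrableOn (fun x : ℝ => ((x:ℂ) ^ ((r:ℂ) - 1) * (1 - (x:ℂ)) ^ ((1:ℂ) - r - 1)).re)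
      (Ioc 0 1) := (h.1).re
  apply (h2.mono_set Ioo_subset_Ioc_self).congr_fun ?_ measurableSet_Ioo
  intro x hx
  obtain ⟨hx0, hx1⟩ := hx
  have e1 : ((r:ℂ) - 1) = ((r - 1 : ℝ) : ℂ) := by push_cast; ring
  have e2 : (1 - (r:ℂ) - 1) = ((-r : ℝ) : ℂ) := by push_cast; ring
  have e3 : (1 - (x:ℂ)) = ((1 - x : ℝ) : ℂ) := by push_cast; ring
  simp only [e1, e2, e3]
  rw [← Complex.ofReal_cpow hx0.le, ← Complex.ofReal_cpow (by linarith), ← Complex.ofReal_mul,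
    Complex.ofReal_re]

theorem beta_lintegral {r : ℝ} (h0 : 0 < r) (h1 : r < 1) :
    ∫⁻ x in Ioo (0:ℝ) 1, ENNReal.ofReal (x ^ (r-1) * (1-x) ^ (-r))
      = ENNReal.ofReal (π / Real.sin (π * r)) := by
  rw [← ofReal_integral_eq_lintegral_ofReal (beta_integrable h0 h1)]
  · congr 1
    rw [← MeasureTheory.integral_Ioc_eq_integral_Ioo, ← intervalIntegral.integral_of_le zero_le_one]
    exact beta_real h0 h1
  · filter_upwards [ae_restrict_mem measurableSet_Ioo] with x hx
    exact mul_nonneg (Real.rpow_nonneg hx.1.le _) (Real.rpow_nonneg (by linarith [hx.2]) _)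

theorem moebius_lintegral {r : ℝ} (h0 : 0 < r) (h1 : r < 1) :
    ∫⁻ t in Ioi (0:ℝ), ENNReal.ofReal (t ^ (r-1) / (1+t))
      = ENNReal.ofReal (π / Real.sin (π * r)) := by
  have himg : (fun x : ℝ => x / (1-x)) '' Ioo 0 1 = Ioi 0 := by
    ext t
    constructor
    · rintro ⟨x, ⟨hx0, hx1⟩, rfl⟩
      exact div_pos hx0 (by linarith)
    · intro ht
      have ht : (0:ℝ) < t := ht
      refine ⟨t/(1+t), ⟨div_pos ht (by linarith), by rw [div_lt_one (by linarith)]; linarith⟩, ?_⟩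
      have h1t : (1:ℝ) + t ≠ 0 := by positivity
      field_simp
      ring
  have hder : ∀ x ∈ Ioo (0:ℝ) 1, HasDerivWithinAt (fun x : ℝ => x / (1-x))
      (((1-x)^2)⁻¹) (Ioo 0 1) x := by
    intro x hx
    have hne : (1:ℝ) - x ≠ 0 := ne_of_gt (by linarith [hx.2])
    have := (hasDerivAt_id x).div ((hasDerivAt_id x).const_sub 1) hne
    exact this.hasDerivWithinAt.congr_deriv (by simp only [id]; field_simp; ring)
  have hinj : InjOn (fun x : ℝ => x / (1-x)) (Ioo 0 1) := by
    intro x hx y hy h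
    have hnx : (1:ℝ) - x ≠ 0 := ne_of_gt (by linarith [hx.2])
    have hny : (1:ℝ) - y ≠ 0 := ne_of_gt (by linarith [hy.2])
    simp only at h
    field_simp at h
    linarith
  have := lint_image (f := fun x : ℝ => x / (1-x)) (f' := fun x => ((1-x)^2)⁻¹)
    measurableSet_Ioo hder hinj (fun t => ENNReal.ofReal (t ^ (r-1) / (1+t)))
  rw [himg] at this
  rw [this, ← beta_lintegral h0 h1]
  apply setLIntegral_congr_fun measurableSet_Ioo
  intro x hx
  dsimp only
  obtain ⟨hx0, hx1⟩ := hx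
  have hu : (0:ℝ) < 1 - x := by linarith
  rw [← ENNReal.ofReal_mul (by positivity)]
  congr 1
  have h2 : 1 + x/(1-x) = 1/(1-x) := by field_simp; ring
  rw [h2, div_rpow hx0.le hu.le, Real.rpow_neg hu.le, abs_of_pos (by positivity)]
  have hur : (1-x) ^ (1:ℝ) * (1-x) ^ (r-1) = (1-x) ^ r := by
    rw [← Real.rpow_add hu]; norm_num
  rw [Real.rpow_one] at hur
  have hxr : (0:ℝ) < x ^ (r-1) := Real.rpow_pos_of_pos hx0 _
  have hur1 : (0:ℝ) < (1-x) ^ (r-1) := Real.rpow_pos_of_pos hu _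
  have hurr : (0:ℝ) < (1-x) ^ r := Real.rpow_pos_of_pos hu _
  field_simp
  rw [← hur]

theorem scaled_lintegral {M r : ℝ} (hM : 0 < M) (h0 : 0 < r) (h1 : r < 1) :
    ∫⁻ x in Ioi (0:ℝ), ENNReal.ofReal ((M/x) ^ (1-r) / (M+x))
      = ENNReal.ofReal (π / Real.sin (π * r)) := by
  have himg : (fun t : ℝ => M * t) '' Ioi 0 = Ioi 0 := by
    ext x
    constructor
    · rintro ⟨t, ht, rfl⟩; exact mul_pos hM ht
    · intro hx
      have hx : (0:ℝ) < x := hx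
      exact ⟨x / M, div_pos hx hM, by field_simp⟩
  have hder : ∀ t ∈ Ioi (0:ℝ), HasDerivWithinAt (fun t : ℝ => M * t) M (Ioi 0) t :=
    fun t _ => ((hasDerivAt_id t).const_mul M).hasDerivWithinAt.congr_deriv (mul_one M)
  have hinj : InjOn (fun t : ℝ => M * t) (Ioi 0) :=
    fun s _ t _ h => mul_left_cancel₀ hM.ne' h
  have key := lint_image (f := fun t : ℝ => M * t) (f' := fun _ => M)
    measurableSet_Ioi hder hinj (fun x => ENNReal.ofReal ((M/x) ^ (1-r) / (M+x)))
  rw [himg] at key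
  rw [key, ← moebius_lintegral h0 h1]
  apply setLIntegral_congr_fun measurableSet_Ioi
  intro t ht
  have ht : (0:ℝ) < t := ht
  dsimp only
  rw [← ENNReal.ofReal_mul (abs_nonneg M)]
  congr 1
  have e1 : M / (M * t) = t⁻¹ := by field_simp
  rw [e1, ← Real.rpow_neg_one t, ← Real.rpow_mul ht.le, show (-1)*(1-r) = r - 1 by ring,
    abs_of_pos hM]
  have h1t : (0:ℝ) < 1 + t := by linarith
  have hpow : (0:ℝ) < t ^ (r-1) := Real.rpow_pos_of_pos ht _
  field_simp

theorem sum_le_lint {h : ℝ → ℝ} (hmono : AntitoneOn h (Ioi 0)) :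
    ∑' n : ℕ, ENNReal.ofReal (h ((n:ℝ)+1)) ≤ ∫⁻ x in Ioi (0:ℝ), ENNReal.ofReal (h x) := by
  have hun : (Ioi (0:ℝ)) = ⋃ n : ℕ, Ioc (n:ℝ) ((n:ℝ)+1) := by
    ext x
    simp only [mem_iUnion, mem_Ioc, mem_Ioi]
    constructor
    · intro hx
      have hceil : 1 ≤ ⌈x⌉₊ := Nat.one_le_ceil_iff.mpr hx
      refine ⟨⌈x⌉₊ - 1, ?_, ?_⟩
      · have h2 : ((⌈x⌉₊ : ℝ)) < x + 1 := Nat.ceil_lt_add_one hx.le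
        have h3 : ((⌈x⌉₊ - 1 : ℕ) : ℝ) = (⌈x⌉₊ : ℝ) - 1 := by
          push_cast [Nat.cast_sub hceil]; ring
        rw [h3]; linarith
      · have h3 : ((⌈x⌉₊ - 1 : ℕ) : ℝ) + 1 = (⌈x⌉₊ : ℝ) := by
          push_cast [Nat.cast_sub hceil]; ring
        rw [h3]; exact Nat.le_ceil x
    · rintro ⟨n, hn1, hn2⟩
      exact lt_of_le_of_lt (Nat.cast_nonneg n) hn1
  have hdisj : Pairwise (Function.onFun Disjoint fun n : ℕ => Ioc (n:ℝ) ((n:ℝ)+1)) := by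
    intro i j hij
    simp only [Function.onFun]
    rw [Set.Ioc_disjoint_Ioc]
    have : ((min (i+1) (j+1) : ℕ) : ℝ) ≤ ((max i j : ℕ) : ℝ) := by
      exact_mod_cast (by omega : min (i+1) (j+1) ≤ max i j)
    push_cast [Nat.cast_min, Nat.cast_max] at this
    convert this using 2 <;> push_cast <;> ring
  rw [hun, lintegral_iUnion (fun n => measurableSet_Ioc) hdisj]
  refine Summable.tsum_le_tsum (fun n => ?_) ENNReal.summable ENNReal.summable
  have hv : (volume (Ioc (n:ℝ) ((n:ℝ)+1))) = 1 := by
    rw [Real.volume_Ioc]; norm_num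
  calc ENNReal.ofReal (h ((n:ℝ)+1))
      = ∫⁻ _ in Ioc (n:ℝ) ((n:ℝ)+1), ENNReal.ofReal (h ((n:ℝ)+1)) := by
        rw [setLIntegral_const, hv, mul_one]
    _ ≤ ∫⁻ x in Ioc (n:ℝ) ((n:ℝ)+1), ENNReal.ofReal (h x) := by
        refine setLIntegral_mono' measurableSet_Ioc (fun x hx => ?_)
        refine ENNReal.ofReal_le_ofReal (hmono ?_ ?_ hx.2)
        · exact lt_of_le_of_lt (Nat.cast_nonneg n) hx.1
        · have : (0:ℝ) < (n:ℝ)+1 := by positivity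
          exact this

theorem weight_antitone {M s : ℝ} (hM : 0 < M) (hs : 0 ≤ s) :
    AntitoneOn (fun x : ℝ => (M/x) ^ s / (M+x)) (Ioi 0) := by
  intro x hx y hy hxy
  have hx : (0:ℝ) < x := hx
  have hy : (0:ℝ) < y := hy
  refine div_le_div₀ (Real.rpow_nonneg (by positivity) s) ?_ (by linarith) (by linarith)
  exact Real.rpow_le_rpow (by positivity) (div_le_div_of_nonneg_left hM.le hx hxy) hs

theorem key_sum {M r : ℝ} (hM : 0 < M) (h0 : 0 < r) (h1 : r < 1) :
    ∑' n : ℕ, ENNReal.ofReal ((M/((n:ℝ)+1)) ^ (1-r) / (M + ((n:ℝ)+1)))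
      ≤ ENNReal.ofReal (π / Real.sin (π * r)) := by
  rw [← scaled_lintegral hM h0 h1]
  exact sum_le_lint (weight_antitone hM (by linarith))

/-- θ-Hilbert's inequality: for conjugate exponents Λ, Λ' > 1 with 1/Λ + 1/Λ' = 1 and
nonnegative sequences {a_m}, {b_n} with ∑ a_m^Λ < ∞ and ∑ b_n^{Λ'} < ∞,
∑_{m,n} a_m b_n/(m+n) ≤ (π/sin(π/Λ)) (∑ a_m^Λ)^{1/Λ} (∑ b_n^{Λ'})^{1/Λ'}. -/
theorem theta_hilbert_inequality (Λ Λ' : ℝ) (hΛ : 1 < Λ) (hΛ' : 1 < Λ')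
    (hconj : 1 / Λ + 1 / Λ' = 1) (a b : ℕ → ℝ)
    (ha : ∀ m, 0 ≤ a m) (hb : ∀ n, 0 ≤ b n)
    (hsa : Summable (fun m : ℕ => a (m + 1) ^ Λ))
    (hsb : Summable (fun n : ℕ => b (n + 1) ^ Λ')) :
    ∑' m : ℕ, ∑' n : ℕ, a (m + 1) * b (n + 1) / (((m : ℝ) + 1) + ((n : ℝ) + 1)) ≤
      (Real.pi / Real.sin (Real.pi / Λ)) * (∑' m : ℕ, a (m + 1) ^ Λ) ^ (1 / Λ) *
        (∑' n : ℕ, b (n + 1) ^ Λ') ^ (1 / Λ') := by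
  have hΛ0 : (0:ℝ) < Λ := by linarith
  have hΛ'0 : (0:ℝ) < Λ' := by linarith
  have hr0 : (0:ℝ) < 1/Λ := by positivity
  have hr1 : 1/Λ < 1 := by rw [div_lt_one hΛ0]; exact hΛ
  have hs0 : (0:ℝ) < 1/Λ' := by positivity
  have hs1 : 1/Λ' < 1 := by rw [div_lt_one hΛ'0]; exact hΛ'
  have hcompl : 1/Λ' = 1 - 1/Λ := by linarith
  have hcompl' : 1/Λ = 1 - 1/Λ' := by linarith
  have hsinpos : 0 < Real.sin (π * (1/Λ)) := by
    apply Real.sin_pos_of_pos_of_lt_pi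
    · positivity
    · nlinarith [Real.pi_pos]
  have hsin' : Real.sin (π * (1/Λ')) = Real.sin (π * (1/Λ)) := by
    rw [hcompl, show π * (1 - 1/Λ) = π - π * (1/Λ) by ring, Real.sin_pi_sub]
  have hc0 : 0 ≤ π / Real.sin (π * (1/Λ)) := by positivity
  set α := 1/(Λ*Λ') with hα
  set C : ENNReal := ENNReal.ofReal (π / Real.sin (π * (1/Λ))) with hC
  set M : ℕ → ℝ := fun m => (m:ℝ)+1 with hM
  have hMpos : ∀ m : ℕ, 0 < M m := fun m => by simp only [hM]; positivity
  set F : ℕ × ℕ → ENNReal := fun z =>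
    ENNReal.ofReal (a (z.1+1) * (M z.1 / M z.2) ^ α / (M z.1 + M z.2) ^ (1/Λ)) with hF
  set G : ℕ × ℕ → ENNReal := fun z =>
    ENNReal.ofReal (b (z.2+1) * (M z.2 / M z.1) ^ α / (M z.1 + M z.2) ^ (1/Λ')) with hG
  have hFnn : ∀ m n : ℕ, 0 ≤ a (m+1) * (M m / M n) ^ α / (M m + M n) ^ (1/Λ) := fun m n =>
    div_nonneg (mul_nonneg (ha _) (Real.rpow_nonneg (by positivity) _)) (Real.rpow_nonneg (by positivity) _)
  have hGnn : ∀ m n : ℕ, 0 ≤ b (n+1) * (M n / M m) ^ α / (M m + M n) ^ (1/Λ') := fun m n =>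
    div_nonneg (mul_nonneg (hb _) (Real.rpow_nonneg (by positivity) _)) (Real.rpow_nonneg (by positivity) _)
  have hconj' : Real.HolderConjugate Λ Λ' := Real.holderConjugate_iff.mpr ⟨hΛ, by rw [← one_div, ← one_div]; exact hconj⟩
  have holder := ENNReal.lintegral_mul_le_Lp_mul_Lq (Measure.count : Measure (ℕ×ℕ)) hconj'
    (measurable_of_countable F).aemeasurable (measurable_of_countable G).aemeasurable
  rw [lintegral_count, lintegral_count, lintegral_count] at holder
  -- product identity
  have hprod : ∀ z : ℕ × ℕ, (F * G) z
      = ENNReal.ofReal (a (z.1+1) * b (z.2+1) / (M z.1 + M z.2)) := by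
    rintro ⟨m, n⟩
    have hm := hMpos m
    have hn := hMpos n
    simp only [Pi.mul_apply, hF, hG]
    rw [← ENNReal.ofReal_mul (hFnn m n)]
    congr 1
    have h1 : (M m / M n) ^ α * (M n / M m) ^ α = 1 := by
      rw [← Real.mul_rpow (by positivity) (by positivity),
        show M m / M n * (M n / M m) = 1 by field_simp, Real.one_rpow]
    have h2 : (M m + M n) ^ (1/Λ) * (M m + M n) ^ (1/Λ') = M m + M n := by
      rw [← Real.rpow_add (by positivity), hconj, Real.rpow_one]
    have hd1 : (0:ℝ) < (M m + M n) ^ (1/Λ) := Real.rpow_pos_of_pos (by positivity) _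
    have hd2 : (0:ℝ) < (M m + M n) ^ (1/Λ') := Real.rpow_pos_of_pos (by positivity) _
    calc a (m+1) * (M m / M n) ^ α / (M m + M n) ^ (1/Λ)
          * (b (n+1) * (M n / M m) ^ α / (M m + M n) ^ (1/Λ'))
        = a (m+1) * b (n+1) * ((M m / M n) ^ α * (M n / M m) ^ α)
            / ((M m + M n) ^ (1/Λ) * (M m + M n) ^ (1/Λ')) := by
          field_simp
      _ = a (m+1) * b (n+1) / (M m + M n) := by rw [h1, h2, mul_one]
  -- F ^ Λ
  have hFp : ∀ z : ℕ × ℕ, F z ^ Λ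
      = ENNReal.ofReal (a (z.1+1) ^ Λ)
        * ENNReal.ofReal ((M z.1 / M z.2) ^ (1/Λ') / (M z.1 + M z.2)) := by
    rintro ⟨m, n⟩
    have hw : (0:ℝ) < M m / M n := by have := hMpos m; have := hMpos n; positivity
    have hS : (0:ℝ) < M m + M n := by have := hMpos m; have := hMpos n; positivity
    simp only [hF]
    rw [ENNReal.ofReal_rpow_of_nonneg (hFnn m n) hΛ0.le,
      ← ENNReal.ofReal_mul (Real.rpow_nonneg (ha _) _)]
    congr 1
    rw [Real.div_rpow (mul_nonneg (ha _) (Real.rpow_nonneg hw.le _)) (Real.rpow_nonneg hS.le _),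
      Real.mul_rpow (ha _) (Real.rpow_nonneg hw.le _),
      ← Real.rpow_mul hw.le, ← Real.rpow_mul hS.le,
      show α * Λ = 1/Λ' by rw [hα]; field_simp,
      show 1/Λ * Λ = 1 by field_simp, Real.rpow_one, mul_div_assoc]
  -- G ^ Λ'
  have hGq : ∀ z : ℕ × ℕ, G z ^ Λ'
      = ENNReal.ofReal (b (z.2+1) ^ Λ')
        * ENNReal.ofReal ((M z.2 / M z.1) ^ (1/Λ) / (M z.2 + M z.1)) := by
    rintro ⟨m, n⟩
    have hw : (0:ℝ) < M n / M m := by have := hMpos m; have := hMpos n; positivity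
    have hS : (0:ℝ) < M m + M n := by have := hMpos m; have := hMpos n; positivity
    simp only [hG]
    rw [ENNReal.ofReal_rpow_of_nonneg (hGnn m n) hΛ'0.le,
      ← ENNReal.ofReal_mul (Real.rpow_nonneg (hb _) _)]
    congr 1
    rw [Real.div_rpow (mul_nonneg (hb _) (Real.rpow_nonneg hw.le _)) (Real.rpow_nonneg hS.le _),
      Real.mul_rpow (hb _) (Real.rpow_nonneg hw.le _),
      ← Real.rpow_mul hw.le, ← Real.rpow_mul hS.le,
      show α * Λ' = 1/Λ by rw [hα]; field_simp,
      show 1/Λ' * Λ' = 1 by field_simp, Real.rpow_one, mul_div_assoc,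
      add_comm (M m) (M n)]
  -- bound on ∑ F^Λ
  have hSa : ∑' z : ℕ×ℕ, F z ^ Λ ≤ C * ∑' m : ℕ, ENNReal.ofReal (a (m+1) ^ Λ) := by
    calc ∑' z : ℕ×ℕ, F z ^ Λ
        = ∑' (m : ℕ) (n : ℕ), ENNReal.ofReal (a (m+1) ^ Λ)
            * ENNReal.ofReal ((M m / M n) ^ (1/Λ') / (M m + M n)) := by
          rw [← ENNReal.tsum_prod]; exact tsum_congr hFp
      _ = ∑' m : ℕ, ENNReal.ofReal (a (m+1) ^ Λ)
            * ∑' n : ℕ, ENNReal.ofReal ((M m / M n) ^ (1/Λ') / (M m + M n)) :=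
          tsum_congr fun m => ENNReal.tsum_mul_left
      _ ≤ ∑' m : ℕ, ENNReal.ofReal (a (m+1) ^ Λ) * C := by
          refine Summable.tsum_le_tsum (fun m => mul_le_mul_right ?_ _) ENNReal.summable ENNReal.summable
          have h := key_sum (hMpos m) hr0 hr1
          rw [← hcompl] at h
          simpa only [hM, hC] using h
      _ = C * ∑' m : ℕ, ENNReal.ofReal (a (m+1) ^ Λ) := by
          rw [ENNReal.tsum_mul_right, mul_comm]
  -- bound on ∑ G^Λ'
  have hSb : ∑' z : ℕ×ℕ, G z ^ Λ' ≤ C * ∑' n : ℕ, ENNReal.ofReal (b (n+1) ^ Λ') := by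
    calc ∑' z : ℕ×ℕ, G z ^ Λ'
        = ∑' (m : ℕ) (n : ℕ), ENNReal.ofReal (b (n+1) ^ Λ')
            * ENNReal.ofReal ((M n / M m) ^ (1/Λ) / (M n + M m)) := by
          rw [← ENNReal.tsum_prod]; exact tsum_congr hGq
      _ = ∑' (n : ℕ) (m : ℕ), ENNReal.ofReal (b (n+1) ^ Λ')
            * ENNReal.ofReal ((M n / M m) ^ (1/Λ) / (M n + M m)) := ENNReal.tsum_comm
      _ = ∑' n : ℕ, ENNReal.ofReal (b (n+1) ^ Λ')
            * ∑' m : ℕ, ENNReal.ofReal ((M n / M m) ^ (1/Λ) / (M n + M m)) :=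
          tsum_congr fun n => ENNReal.tsum_mul_left
      _ ≤ ∑' n : ℕ, ENNReal.ofReal (b (n+1) ^ Λ') * C := by
          refine Summable.tsum_le_tsum (fun n => mul_le_mul_right ?_ _) ENNReal.summable ENNReal.summable
          have h := key_sum (hMpos n) hs0 hs1
          rw [← hcompl'] at h
          rw [hC, ← hsin']
          simpa only [hM] using h
      _ = C * ∑' n : ℕ, ENNReal.ofReal (b (n+1) ^ Λ') := by
          rw [ENNReal.tsum_mul_right, mul_comm]
  -- combine
  set SA : ENNReal := ∑' m : ℕ, ENNReal.ofReal (a (m+1) ^ Λ) with hSA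
  set SB : ENNReal := ∑' n : ℕ, ENNReal.ofReal (b (n+1) ^ Λ') with hSB
  have hmain : ∑' z : ℕ×ℕ, ENNReal.ofReal (a (z.1+1) * b (z.2+1) / (M z.1 + M z.2))
      ≤ C * (SA ^ (1/Λ) * SB ^ (1/Λ')) := by
    calc ∑' z : ℕ×ℕ, ENNReal.ofReal (a (z.1+1) * b (z.2+1) / (M z.1 + M z.2))
        = ∑' z : ℕ×ℕ, (F * G) z := (tsum_congr hprod).symm
      _ ≤ (∑' z : ℕ×ℕ, F z ^ Λ) ^ (1/Λ) * (∑' z : ℕ×ℕ, G z ^ Λ') ^ (1/Λ') := holder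
      _ ≤ (C * SA) ^ (1/Λ) * (C * SB) ^ (1/Λ') :=
          mul_le_mul' (ENNReal.rpow_le_rpow hSa hr0.le) (ENNReal.rpow_le_rpow hSb hs0.le)
      _ = (C ^ (1/Λ) * C ^ (1/Λ')) * (SA ^ (1/Λ) * SB ^ (1/Λ')) := by
          rw [ENNReal.mul_rpow_of_nonneg _ _ hr0.le, ENNReal.mul_rpow_of_nonneg _ _ hs0.le]
          ring
      _ = C * (SA ^ (1/Λ) * SB ^ (1/Λ')) := by
          rw [← ENNReal.rpow_add_of_nonneg _ _ hr0.le hs0.le, hconj, ENNReal.rpow_one]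
  -- translate to reals
  have hSAr : SA = ENNReal.ofReal (∑' m : ℕ, a (m+1) ^ Λ) := by
    rw [hSA, ENNReal.ofReal_tsum_of_nonneg (fun m => Real.rpow_nonneg (ha _) _) hsa]
  have hSBr : SB = ENNReal.ofReal (∑' n : ℕ, b (n+1) ^ Λ') := by
    rw [hSB, ENNReal.ofReal_tsum_of_nonneg (fun n => Real.rpow_nonneg (hb _) _) hsb]
  have hAnn : 0 ≤ ∑' m : ℕ, a (m+1) ^ Λ := tsum_nonneg fun m => Real.rpow_nonneg (ha _) _
  have hBnn : 0 ≤ ∑' n : ℕ, b (n+1) ^ Λ' := tsum_nonneg fun n => Real.rpow_nonneg (hb _) _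
  set RR : ℝ := (π / Real.sin (π * (1/Λ))) *
      ((∑' m : ℕ, a (m+1) ^ Λ) ^ (1/Λ) * (∑' n : ℕ, b (n+1) ^ Λ') ^ (1/Λ')) with hRR
  have hRRnn : 0 ≤ RR := by
    rw [hRR]
    exact mul_nonneg hc0 (mul_nonneg (Real.rpow_nonneg hAnn _) (Real.rpow_nonneg hBnn _))
  have hRHS : C * (SA ^ (1/Λ) * SB ^ (1/Λ')) = ENNReal.ofReal RR := by
    rw [hSAr, hSBr, ENNReal.ofReal_rpow_of_nonneg hAnn hr0.le,
      ENNReal.ofReal_rpow_of_nonneg hBnn hs0.le,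
      ← ENNReal.ofReal_mul (Real.rpow_nonneg hAnn _), ← ENNReal.ofReal_mul hc0, hRR]
  have hmain2 : ∑' z : ℕ×ℕ, ENNReal.ofReal (a (z.1+1) * b (z.2+1) / (M z.1 + M z.2))
      ≤ ENNReal.ofReal RR := hRHS ▸ hmain
  have htnn : ∀ z : ℕ×ℕ, 0 ≤ a (z.1+1) * b (z.2+1) / (M z.1 + M z.2) := fun z =>
    div_nonneg (mul_nonneg (ha _) (hb _)) (by linarith [hMpos z.1, hMpos z.2])
  have hsumT : Summable (fun z : ℕ×ℕ => a (z.1+1) * b (z.2+1) / (M z.1 + M z.2)) := by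
    have hne : ∑' z : ℕ×ℕ, ENNReal.ofReal (a (z.1+1) * b (z.2+1) / (M z.1 + M z.2)) ≠ ⊤ :=
      ne_top_of_le_ne_top ENNReal.ofReal_ne_top hmain2
    exact (ENNReal.summable_toReal hne).congr fun z => ENNReal.toReal_ofReal (htnn z)
  have hfact : ∀ m : ℕ, Summable fun n : ℕ => a (m+1) * b (n+1) / (M m + M n) :=
    fun m => hsumT.prod_factor m
  have hswap : ∑' (m : ℕ) (n : ℕ), a (m+1) * b (n+1) / (M m + M n)
      = ∑' z : ℕ×ℕ, a (z.1+1) * b (z.2+1) / (M z.1 + M z.2) :=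
    (Summable.tsum_prod' hsumT hfact).symm
  have hToReal : ∑' z : ℕ×ℕ, a (z.1+1) * b (z.2+1) / (M z.1 + M z.2)
      = (∑' z : ℕ×ℕ, ENNReal.ofReal (a (z.1+1) * b (z.2+1) / (M z.1 + M z.2))).toReal := by
    rw [ENNReal.tsum_toReal_eq (fun z => ENNReal.ofReal_ne_top)]
    exact tsum_congr fun z => (ENNReal.toReal_ofReal (htnn z)).symm
  have hfinal : ∑' (m : ℕ) (n : ℕ), a (m+1) * b (n+1) / (M m + M n) ≤ RR := by
    rw [hswap, hToReal]
    calc (∑' z : ℕ×ℕ, ENNReal.ofReal (a (z.1+1) * b (z.2+1) / (M z.1 + M z.2))).toReal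
        ≤ (ENNReal.ofReal RR).toReal := ENNReal.toReal_mono ENNReal.ofReal_ne_top hmain2
      _ = RR := ENNReal.toReal_ofReal hRRnn
  calc ∑' (m : ℕ) (n : ℕ), a (m + 1) * b (n + 1) / (((m : ℝ) + 1) + ((n : ℝ) + 1))
      = ∑' (m : ℕ) (n : ℕ), a (m+1) * b (n+1) / (M m + M n) := by
        simp only [hM]
    _ ≤ RR := hfinal
    _ = (Real.pi / Real.sin (Real.pi / Λ)) * (∑' m : ℕ, a (m + 1) ^ Λ) ^ (1 / Λ) *
        (∑' n : ℕ, b (n + 1) ^ Λ') ^ (1 / Λ') := by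
        rw [hRR, mul_one_div π Λ, mul_assoc]
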